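/- Let Λ ⊂ ℝⁿ be a nonempty compact convex set and φ : ℝⁿ → ℝ continuous. Define u(t,x) := max_{v∈Λ} φ(x + t v) for (t,x) ∈ [0,∞) × ℝⁿ. Then u satisfies the semigroup property: u(t+s, x) = max_{v∈Λ} u(t, x + s v) for all s,t ≥ 0 and x ∈ ℝⁿ. -/

import Mathlib

/-- the dynamic programming (semigroup) property of
`u(t,x) = max_{v ∈ Λ} φ(x + t v)` for a nonempty compact convex `Λ`. -/
theorem maximal_semigroup_property
    (n : ℕ) (Λ : Set (Fin n → ℝ)) (hne : Λ.Nonempty) (hcomp : IsCompact Λ)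
    (hconv : Convex ℝ Λ)
    (φ : (Fin n → ℝ) → ℝ) (hφ : Continuous φ)
    (u : ℝ → (Fin n → ℝ) → ℝ)
    (hu : ∀ t x, u t x = sSup ((fun v => φ (x + t • v)) '' Λ)) :
    ∀ s t : ℝ, 0 ≤ s → 0 ≤ t → ∀ x : Fin n → ℝ,
      u (t + s) x = sSup ((fun v => u t (x + s • v)) '' Λ) := by
  intro s t hs ht x
  -- general bddAbove fact
  have keyBdd : ∀ (y : Fin n → ℝ) (c : ℝ), BddAbove ((fun v => φ (y + c • v)) '' Λ) := by
    intro y c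
    have hcont : Continuous fun v : Fin n → ℝ => φ (y + c • v) :=
      hφ.comp (continuous_const.add (continuous_const_smul c))
    exact (hcomp.image hcont).bddAbove
  have keyNe : ∀ (y : Fin n → ℝ) (c : ℝ), ((fun v => φ (y + c • v)) '' Λ).Nonempty :=
    fun y c => hne.image _
  -- compact set of all points x + s•w + t•v
  have hK : IsCompact ((fun p : (Fin n → ℝ) × (Fin n → ℝ) => x + s • p.1 + t • p.2) '' (Λ ×ˢ Λ)) := by
    apply (hcomp.prod hcomp).image
    exact (continuous_const.add ((continuous_const_smul s).comp continuous_fst)).add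
      ((continuous_const_smul t).comp continuous_snd)
  have hMbdd : BddAbove (φ '' ((fun p : (Fin n → ℝ) × (Fin n → ℝ) => x + s • p.1 + t • p.2) '' (Λ ×ˢ Λ))) :=
    (hK.image hφ).bddAbove
  set M : ℝ := sSup (φ '' ((fun p : (Fin n → ℝ) × (Fin n → ℝ) => x + s • p.1 + t • p.2) '' (Λ ×ˢ Λ))) with hM
  have hle_M : ∀ w ∈ Λ, ∀ v ∈ Λ, φ (x + s • w + t • v) ≤ M := by
    intro w hw v hv
    exact le_csSup hMbdd ⟨_, ⟨(w, v), Set.mk_mem_prod hw hv, rfl⟩, rfl⟩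
  -- the inner function
  have hg : ∀ w, u t (x + s • w) = sSup ((fun v => φ (x + s • w + t • v)) '' Λ) := by
    intro w
    exact hu t (x + s • w)
  have hgM : ∀ w ∈ Λ, u t (x + s • w) ≤ M := by
    intro w hw
    rw [hg w]
    apply csSup_le (keyNe _ _)
    rintro a ⟨v, hv, rfl⟩
    exact hle_M w hw v hv
  have hRbdd : BddAbove ((fun w => u t (x + s • w)) '' Λ) := by
    refine ⟨M, ?_⟩
    rintro a ⟨w, hw, rfl⟩
    exact hgM w hw
  rw [hu]
  apply le_antisymm
  · apply csSup_le (keyNe _ _)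
    rintro a ⟨v, hv, rfl⟩
    show φ (x + (t + s) • v) ≤ _
    have h1 : x + (t + s) • v = x + s • v + t • v := by
      rw [add_smul]; abel
    rw [h1]
    have h2 : φ (x + s • v + t • v) ≤ u t (x + s • v) := by
      rw [hg v]
      exact le_csSup (keyBdd _ _) ⟨v, hv, rfl⟩
    exact h2.trans (le_csSup hRbdd ⟨v, hv, rfl⟩)
  · apply csSup_le (hne.image _)
    rintro a ⟨w, hw, rfl⟩
    show u t (x + s • w) ≤ _
    rw [hg w]
    apply csSup_le (keyNe _ _)
    rintro a ⟨v, hv, rfl⟩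
    show φ (x + s • w + t • v) ≤ _
    rcases eq_or_lt_of_le (add_nonneg ht hs) with h0 | h0
    · -- t + s = 0, so s = t = 0
      have hs0 : s = 0 := by linarith [(add_nonneg ht hs)]
      have ht0 : t = 0 := by linarith
      have : x + s • w + t • v = x + (t + s) • w := by
        rw [hs0, ht0]; simp
      rw [this]
      exact le_csSup (keyBdd _ _) ⟨w, hw, rfl⟩
    · set θ := s / (t + s) with hθ
      have hθ0 : 0 ≤ θ := div_nonneg hs (le_of_lt h0)
      have hθ1 : 0 ≤ t / (t + s) := div_nonneg ht (le_of_lt h0)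
      have hsum : θ + t / (t + s) = 1 := by
        rw [hθ, ← add_div, add_comm s t, div_self (ne_of_gt h0)]
      have hmem : θ • w + (t / (t + s)) • v ∈ Λ := hconv hw hv hθ0 hθ1 hsum
      have halg : x + s • w + t • v = x + (t + s) • (θ • w + (t / (t + s)) • v) := by
        rw [smul_add, smul_smul, smul_smul, hθ,
          mul_div_cancel₀ _ (ne_of_gt h0), mul_div_cancel₀ _ (ne_of_gt h0)]
        abel
      rw [halg]
      exact le_csSup (keyBdd _ _) ⟨_, hmem, rfl⟩
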